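/- Let m and n be coprime integers with 0 < m < n. Define (m', n') = f(m,n) and blocks B₀, B₁ as in the context. Then m' and n' are coprime with 0 ≤ m' ≤ n' < n, and the list (χ_{m,n}(1), …, χ_{m,n}(n)) equals the concatenation B_{χ_{m',n'}(1)} ++ B_{χ_{m',n'}(2)} ++ ⋯ ++ B_{χ_{m',n'}(n')}, where χ_{m',n'}(i) = ⌊im'/n'⌋ − ⌊(i−1)m'/n'⌋. -/

import Mathlib

/-- `chi m n i = ⌊im/n⌋ − ⌊(i−1)m/n⌋` (floor division over `ℤ`). -/
def chi (m n : ℕ) (i : ℤ) : ℤ := Int.fdiv (i * m) n - Int.fdiv ((i - 1) * m) n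

/-- The Euclidean step: `f(m,n) = (m(⌊n/m⌋+1) − n, m)` if `n ≥ 2m`, and
`f(m,n) = (n − (n−m)⌊n/(n−m)⌋, n−m)` if `n < 2m`. -/
def euclStep (m n : ℕ) : ℕ × ℕ :=
  if 2 * m ≤ n then (m * (n / m + 1) - n, m) else (n - (n - m) * (n / (n - m)), n - m)

/-- The blocks `B₁, B₀` associated to `(m,n)` (as lists over `ℤ`): if `n ≥ 2m`, with
`q = ⌊n/m⌋`, `B₁ = (0^{q−1}, 1)` and `B₀ = (0^q, 1)`; if `n < 2m`, with
`q = ⌊n/(n−m)⌋`, `B₁ = (0, 1^q)` and `B₀ = (0, 1^{q−1})`. `block m n b` is `B₁` if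
`b = 1` and `B₀` otherwise. -/
def block (m n : ℕ) (b : ℤ) : List ℤ :=
  if 2 * m ≤ n then
    if b = 1 then List.replicate (n / m - 1) 0 ++ [1] else List.replicate (n / m) 0 ++ [1]
  else
    if b = 1 then 0 :: List.replicate (n / (n - m)) 1
    else 0 :: List.replicate (n / (n - m) - 1) 1

private lemma nat_core (m : ℕ) (hm : 0 < m) (j s : ℕ) (hs : s ≤ m) :
    j * (m - s) / m + (j * s + (m - 1)) / m = j := by
  obtain ⟨a, r, h, hrm⟩ : ∃ a r, m * a + r = j * s ∧ r < m :=
    ⟨_, _, Nat.div_add_mod _ _, Nat.mod_lt _ hm⟩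
  have hjs : j * s ≤ m * j := by
    calc j * s ≤ j * m := Nat.mul_le_mul_left j hs
    _ = m * j := Nat.mul_comm j m
  have haj : a ≤ j := Nat.le_of_mul_le_mul_left (by omega) hm
  have hsecond : (j * s + (m - 1)) / m = a + (r + (m - 1)) / m := by
    rw [← h, add_assoc, Nat.mul_add_div hm]
  have h' : (m : ℤ) * a + r = j * s := by exact_mod_cast h
  rcases Nat.eq_zero_or_pos r with h0 | hpos
  · subst h0
    have hfirst : j * (m - s) = m * (j - a) := by
      zify [hs, haj]; linear_combination h'
    rw [hfirst, Nat.mul_div_cancel_left _ hm, hsecond, zero_add,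
      Nat.div_eq_of_lt (by omega)]
    omega
  · have haj' : a + 1 ≤ j := by
      rcases Nat.lt_or_ge a j with h2 | h2
      · exact h2
      · exact absurd (Nat.mul_le_mul_left m h2) (by omega)
    have h1 : 1 ≤ j - a := by omega
    have hfirst : j * (m - s) = m * (j - a - 1) + (m - r) := by
      zify [hs, hrm.le, haj, h1]; linear_combination h'
    have hdiv1 : (r + (m - 1)) / m = 1 := Nat.div_eq_of_lt_le (by omega) (by omega)
    rw [hfirst, Nat.mul_add_div hm, Nat.div_eq_of_lt (by omega), hsecond, hdiv1]
    omega

private lemma chi_nat (m n i : ℕ) :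
    chi m n ((i : ℤ) + 1) = ((i + 1) * m / n : ℕ) - ((i * m / n : ℕ) : ℤ) := by
  unfold chi
  rw [show ((i : ℤ) + 1 - 1) * m = ((i * m : ℕ) : ℤ) by push_cast; ring,
      show ((i : ℤ) + 1) * m = (((i + 1) * m : ℕ) : ℤ) by push_cast; ring,
      ← Int.ofNat_fdiv, ← Int.ofNat_fdiv]

private lemma ofFn_eq_range_map {α : Type*} (g : ℕ → α) (k : ℕ) :
    (List.ofFn fun i : Fin k => g i) = (List.range k).map g := by
  apply List.ext_getElem <;> simp

private lemma range_map_flatten {α : Type*} (g : ℕ → α) (B : ℕ → List α) (c : ℕ → ℕ)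
    (h0 : c 0 = 0) :
    ∀ N, (∀ j, j < N → c j ≤ c (j + 1)) →
      (∀ j, j < N → ((List.range (c (j + 1) - c j)).map fun t => g (c j + t)) = B j) →
      (List.range (c N)).map g = ((List.range N).map B).flatten := by
  intro N
  induction N with
  | zero => simp [h0]
  | succ N ih =>
    intro hmono hblk
    have hc : c (N + 1) = c N + (c (N + 1) - c N) := by
      have := hmono N (by omega); omega
    rw [hc, List.range_add, List.map_append, List.map_map,
      ih (fun j hj => hmono j (by omega)) (fun j hj => hblk j (by omega)),
      List.range_succ, List.map_append, List.flatten_append]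
    congr 1
    simp only [List.map_cons, List.map_nil, List.flatten_cons, List.flatten_nil,
      List.append_nil]
    rw [← hblk N (by omega)]
    rfl

private lemma map_last_one (L : ℕ) (hL : 1 ≤ L) :
    ((List.range L).map fun t => if t + 1 = L then (1 : ℤ) else 0)
      = List.replicate (L - 1) 0 ++ [1] := by
  obtain ⟨k, rfl⟩ : ∃ k, L = k + 1 := ⟨L - 1, by omega⟩
  rw [List.range_succ, List.map_append]
  simp only [Nat.add_sub_cancel]
  congr 1
  · rw [List.eq_replicate_iff]
    refine ⟨by simp, ?_⟩
    intro b hb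
    simp only [List.mem_map, List.mem_range] at hb
    obtain ⟨t, ht, rfl⟩ := hb
    simp [show ¬(t = k) by omega]
  · simp

private lemma map_first_zero (L : ℕ) (hL : 1 ≤ L) :
    ((List.range L).map fun t => if t = 0 then (0 : ℤ) else 1)
      = 0 :: List.replicate (L - 1) 1 := by
  obtain ⟨k, rfl⟩ : ∃ k, L = k + 1 := ⟨L - 1, by omega⟩
  rw [List.range_succ_eq_map, List.map_cons]
  simp only [if_pos rfl, Nat.add_sub_cancel]
  congr 1
  rw [List.map_map, List.eq_replicate_iff]
  refine ⟨by simp, ?_⟩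
  intro b hb
  simp only [List.mem_map, List.mem_range, Function.comp] at hb
  obtain ⟨t, ht, rfl⟩ := hb
  simp

/-- For coprime `0 < m < n` with `(m', n') = f(m,n)`: `m'` and `n'`
are coprime with `0 ≤ m' ≤ n' < n`, and the list `(χ_{m,n}(1), …, χ_{m,n}(n))` is the
concatenation `B_{χ_{m',n'}(1)} ++ ⋯ ++ B_{χ_{m',n'}(n')}`. -/
theorem chi_block_decomposition (m n : ℕ) (hm : 0 < m) (hmn : m < n)
    (hcop : Nat.Coprime m n) :
    Nat.Coprime (euclStep m n).1 (euclStep m n).2 ∧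
    (euclStep m n).1 ≤ (euclStep m n).2 ∧ (euclStep m n).2 < n ∧
    (List.ofFn fun i : Fin n => chi m n ((i : ℕ) + 1)) =
      (List.ofFn fun i : Fin (euclStep m n).2 =>
        block m n (chi (euclStep m n).1 (euclStep m n).2 ((i : ℕ) + 1))).flatten := by
  have hn : 0 < n := lt_trans hm hmn
  by_cases hcase : 2 * m ≤ n
  · -- Case 1 : n ≥ 2m
    set q := n / m with hq
    set r0 := n % m with hr0
    have hd : m * q + r0 = n := Nat.div_add_mod n m
    have hr0m : r0 < m := Nat.mod_lt n hm
    have hq2 : 2 ≤ q := (Nat.le_div_iff_mul_le hm).mpr (by omega)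
    have hm'eq : m * (q + 1) - n = m - r0 := by
      have : m * (q + 1) = m * q + m := by ring
      omega
    have hstep : euclStep m n = (m - r0, m) := by
      simp only [euclStep, if_pos hcase, ← hq, hm'eq]
    rw [hstep]
    dsimp only
    have hgr : Nat.gcd r0 m = 1 := by rw [hr0, ← Nat.gcd_rec]; exact hcop
    have hcop' : Nat.Coprime (m - r0) m := by
      have h1 : Nat.gcd (m - r0) m ∣ r0 := by
        have := Nat.dvd_sub (Nat.gcd_dvd_right (m - r0) m) (Nat.gcd_dvd_left (m - r0) m)
        rwa [show m - (m - r0) = r0 by omega] at this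
      have := Nat.dvd_gcd h1 (Nat.gcd_dvd_right (m - r0) m)
      rw [hgr] at this
      exact Nat.dvd_one.mp this
    refine ⟨hcop', by omega, hmn, ?_⟩
    -- list part
    rw [ofFn_eq_range_map (fun t => chi m n ((t : ℤ) + 1)) n,
        ofFn_eq_range_map (fun j => block m n (chi (m - r0) m ((j : ℤ) + 1))) m]
    set c : ℕ → ℕ := fun j => (j * n + (m - 1)) / m with hc
    have hc0 : c 0 = 0 := by
      show (0 * n + (m - 1)) / m = 0
      rw [Nat.zero_mul, Nat.zero_add]
      exact Nat.div_eq_of_lt (by omega)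
    have hcm : c m = n := by
      show (m * n + (m - 1)) / m = n
      rw [show m * n + (m - 1) = (m - 1) + n * m by ring, Nat.add_mul_div_right _ _ hm,
        Nat.div_eq_of_lt (show m - 1 < m by omega)]
      omega
    have hmono : ∀ j : ℕ, c j ≤ c (j + 1) := by
      intro j
      have h1 : j * n ≤ (j + 1) * n := by nlinarith
      exact Nat.div_le_div_right (by omega)
    have hCF : ∀ j i : ℕ, c j ≤ i ↔ j ≤ i * m / n := by
      intro j i
      have h1 : (c j ≤ i) ↔ j * n ≤ i * m := by
        show (j * n + (m - 1)) / m ≤ i ↔ _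
        rw [Nat.div_le_iff_le_mul_add_pred hm, Nat.mul_comm m i]
        omega
      rw [h1, Nat.le_div_iff_mul_le hn]
    have hFstep : ∀ i : ℕ, (i + 1) * m / n ≤ i * m / n + 1 := by
      intro i
      have h1 : (i + 1) * m ≤ i * m + n := by
        have : (i + 1) * m = i * m + m := by ring
        omega
      calc (i + 1) * m / n ≤ (i * m + n) / n := Nat.div_le_div_right h1
        _ = i * m / n + 1 := Nat.add_div_right _ hn
    have hK1 : ∀ j : ℕ, c j = j * q + (j * r0 + (m - 1)) / m := by
      intro j
      show (j * n + (m - 1)) / m = _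
      rw [show j * n + (m - 1) = (j * r0 + (m - 1)) + (j * q) * m by rw [← hd]; ring,
        Nat.add_mul_div_right _ _ hm]
      omega
    have hK2 : ∀ j : ℕ, j * (m - r0) / m + (j * r0 + (m - 1)) / m = j :=
      fun j => nat_core m hm j r0 hr0m.le
    have hustep : ∀ j : ℕ, (j * r0 + (m - 1)) / m ≤ ((j + 1) * r0 + (m - 1)) / m ∧
        ((j + 1) * r0 + (m - 1)) / m ≤ (j * r0 + (m - 1)) / m + 1 := by
      intro j
      have h1 : (j + 1) * r0 = j * r0 + r0 := by ring
      constructor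
      · exact Nat.div_le_div_right (by omega)
      · calc ((j + 1) * r0 + (m - 1)) / m ≤ (j * r0 + (m - 1) + m) / m :=
            Nat.div_le_div_right (by omega)
          _ = (j * r0 + (m - 1)) / m + 1 := Nat.add_div_right _ hm
    have hmain := range_map_flatten (fun t => chi m n ((t : ℤ) + 1))
      (fun j => block m n (chi (m - r0) m ((j : ℤ) + 1))) c hc0 m
      (fun j _ => hmono j) ?_
    · rw [hcm] at hmain
      exact hmain
    -- per-block
    intro j hj
    obtain ⟨u0, hu0⟩ : ∃ u0, (j * r0 + (m - 1)) / m = u0 := ⟨_, rfl⟩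
    obtain ⟨u1, hu1⟩ : ∃ u1, ((j + 1) * r0 + (m - 1)) / m = u1 := ⟨_, rfl⟩
    obtain ⟨len, hlen⟩ : ∃ L, c (j + 1) - c j = L := ⟨_, rfl⟩
    have hcj : c j = j * q + u0 := by rw [hK1 j, hu0]
    have hcj1 : c (j + 1) = j * q + q + u1 := by rw [hK1 (j + 1), hu1]; ring
    have hust : u0 ≤ u1 ∧ u1 ≤ u0 + 1 := by rw [← hu0, ← hu1]; exact hustep j
    have hK2j : j * (m - r0) / m + u0 = j := by rw [← hu0]; exact hK2 j
    have hK2j1 : (j + 1) * (m - r0) / m + u1 = j + 1 := by rw [← hu1]; exact hK2 (j + 1)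
    have hlenval : len = q + u1 - u0 := by omega
    have hlen1 : 1 ≤ len := by omega
    have hccc : c (j + 1) = c j + len := by omega
    rw [hlen]
    show _ = block m n (chi (m - r0) m ((j : ℤ) + 1))
    have hFt : ∀ t, t < len → (c j + t) * m / n = j := by
      intro t ht
      have h1 : j ≤ (c j + t) * m / n := (hCF j (c j + t)).mp (by omega)
      have h2 : ¬ (j + 1 ≤ (c j + t) * m / n) := by rw [← hCF]; omega
      omega
    have hFlast : (c j + len) * m / n = j + 1 := by
      have h1 : j + 1 ≤ (c j + len) * m / n := (hCF (j + 1) (c j + len)).mp (by omega)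
      have h2 : (c j + len) * m / n ≤ (c j + (len - 1)) * m / n + 1 := by
        rw [show c j + len = (c j + (len - 1)) + 1 by omega]
        exact hFstep _
      have h3 := hFt (len - 1) (by omega)
      omega
    have hval : ∀ t, t < len → chi m n ((c j + t : ℕ) + 1 : ℤ) =
        if t + 1 = len then 1 else 0 := by
      intro t ht
      rw [chi_nat]
      by_cases h : t + 1 = len
      · rw [hFt t ht, show c j + t + 1 = c j + len by omega, hFlast]
        simp [h]
      · rw [hFt t ht, show c j + t + 1 = c j + (t + 1) by ring, hFt (t + 1) (by omega)]
        simp [h]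
    have hmapval : ((List.range len).map fun t => chi m n ((c j + t : ℕ) + 1 : ℤ)) =
        (List.range len).map fun t => if t + 1 = len then (1 : ℤ) else 0 := by
      apply List.map_congr_left
      intro t ht
      exact hval t (List.mem_range.mp ht)
    have hchi' : chi (m - r0) m ((j : ℤ) + 1) =
        ((j + 1) * (m - r0) / m : ℕ) - ((j * (m - r0) / m : ℕ) : ℤ) := chi_nat _ _ _
    rcases show u1 = u0 ∨ u1 = u0 + 1 by omega with he | he
    · -- chi' = 1, len = q
      have hχ : chi (m - r0) m ((j : ℤ) + 1) = 1 := by rw [hchi']; omega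
      have hlenq : len = q := by omega
      rw [hmapval, hχ, map_last_one len hlen1]
      simp only [block, if_pos hcase, ← hq, hlenq]
      simp
    · -- chi' = 0, len = q + 1
      have hχ : chi (m - r0) m ((j : ℤ) + 1) = 0 := by rw [hchi']; omega
      have hlenq : len = q + 1 := by omega
      rw [hmapval, hχ, map_last_one len hlen1]
      simp only [block, if_pos hcase, ← hq, hlenq, Nat.add_sub_cancel]
      simp
  · -- Case 2 : n < 2m
    set d := n - m with hdd
    have hd0 : 0 < d := by omega
    set q := n / d with hq
    set m' := n % d with hm'
    have hdv : d * q + m' = n := Nat.div_add_mod n d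
    have hm'd : m' < d := Nat.mod_lt n hd0
    have hq2 : 2 ≤ q := (Nat.le_div_iff_mul_le hd0).mpr (by omega)
    have hm'eq : n - d * q = m' := by omega
    have hstep : euclStep m n = (m', d) := by
      simp only [euclStep, if_neg hcase, ← hdd, ← hq, hm'eq]
    rw [hstep]
    dsimp only
    have hcd : Nat.gcd d n = 1 := by
      have h1 : Nat.gcd d n ∣ m := by
        have := Nat.dvd_sub (Nat.gcd_dvd_right d n) (Nat.gcd_dvd_left d n)
        rwa [show n - d = m by omega] at this
      have h2 := Nat.dvd_gcd h1 (Nat.gcd_dvd_right d n)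
      rw [hcop] at h2
      exact Nat.dvd_one.mp h2
    have hcop' : Nat.Coprime m' d := by
      show Nat.gcd m' d = 1
      rw [hm', ← Nat.gcd_rec]
      exact hcd
    refine ⟨hcop', hm'd.le, by omega, ?_⟩
    rw [ofFn_eq_range_map (fun t => chi m n ((t : ℤ) + 1)) n,
        ofFn_eq_range_map (fun j => block m n (chi m' d ((j : ℤ) + 1))) d]
    set c : ℕ → ℕ := fun j => j * n / d with hc
    have hc0 : c 0 = 0 := by
      show 0 * n / d = 0
      simp
    have hcd' : c d = n := by
      show d * n / d = n
      exact Nat.mul_div_cancel_left n hd0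
    have hmono : ∀ j : ℕ, c j ≤ c (j + 1) := by
      intro j
      have h1 : j * n ≤ (j + 1) * n := by nlinarith
      exact Nat.div_le_div_right (by omega)
    have hCG : ∀ j i : ℕ, c j < i ↔ j + 1 ≤ (i * d + (n - 1)) / n := by
      intro j i
      have h1 : c j < i ↔ j * n < i * d := by
        show j * n / d < i ↔ _
        rw [Nat.div_lt_iff_lt_mul hd0]
      have h2 : j + 1 ≤ (i * d + (n - 1)) / n ↔ j * n < i * d := by
        rw [Nat.le_div_iff_mul_le hn]
        have : (j + 1) * n = j * n + n := by ring
        omega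
      rw [h1, h2]
    have hGstep : ∀ i : ℕ, ((i + 1) * d + (n - 1)) / n ≤ (i * d + (n - 1)) / n + 1 := by
      intro i
      have h1 : (i + 1) * d = i * d + d := by ring
      calc ((i + 1) * d + (n - 1)) / n ≤ (i * d + (n - 1) + n) / n :=
          Nat.div_le_div_right (by omega)
        _ = _ := Nat.add_div_right _ hn
    have hK2 : ∀ i : ℕ, i * m / n + (i * d + (n - 1)) / n = i := by
      intro i
      have := nat_core n hn i d (by omega)
      rwa [show n - d = m by omega] at this
    have hK1 : ∀ j : ℕ, c j = j * q + j * m' / d := by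
      intro j
      show j * n / d = _
      rw [show j * n = (j * m') + (j * q) * d by rw [← hdv]; ring,
        Nat.add_mul_div_right _ _ hd0]
      omega
    have hF'step : ∀ j : ℕ, j * m' / d ≤ (j + 1) * m' / d ∧
        (j + 1) * m' / d ≤ j * m' / d + 1 := by
      intro j
      have h1 : (j + 1) * m' = j * m' + m' := by ring
      constructor
      · exact Nat.div_le_div_right (by omega)
      · calc (j + 1) * m' / d ≤ (j * m' + d) / d := Nat.div_le_div_right (by omega)
          _ = j * m' / d + 1 := Nat.add_div_right _ hd0
    have hmain := range_map_flatten (fun t => chi m n ((t : ℤ) + 1))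
      (fun j => block m n (chi m' d ((j : ℤ) + 1))) c hc0 d
      (fun j _ => hmono j) ?_
    · rw [hcd'] at hmain
      exact hmain
    intro j hj
    obtain ⟨u0, hu0⟩ : ∃ u0, j * m' / d = u0 := ⟨_, rfl⟩
    obtain ⟨u1, hu1⟩ : ∃ u1, (j + 1) * m' / d = u1 := ⟨_, rfl⟩
    obtain ⟨len, hlen⟩ : ∃ L, c (j + 1) - c j = L := ⟨_, rfl⟩
    have hcj : c j = j * q + u0 := by rw [hK1 j, hu0]
    have hcj1 : c (j + 1) = j * q + q + u1 := by rw [hK1 (j + 1), hu1]; ring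
    have hust : u0 ≤ u1 ∧ u1 ≤ u0 + 1 := by rw [← hu0, ← hu1]; exact hF'step j
    have hlenval : len = q + u1 - u0 := by omega
    have hlen1 : 1 ≤ len := by omega
    have hccc : c (j + 1) = c j + len := by omega
    rw [hlen]
    show _ = block m n (chi m' d ((j : ℤ) + 1))
    have hGmid : ∀ i : ℕ, c j < i → i ≤ c (j + 1) → (i * d + (n - 1)) / n = j + 1 := by
      intro i h1 h2
      have g1 : j + 1 ≤ (i * d + (n - 1)) / n := (hCG j i).mp h1
      have g2 : ¬ (j + 1 + 1 ≤ (i * d + (n - 1)) / n) := by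
        rw [← hCG]; omega
      omega
    have hGcj : (c j * d + (n - 1)) / n = j := by
      have g2 : ¬ (j + 1 ≤ (c j * d + (n - 1)) / n) := by rw [← hCG]; omega
      have g1 := hGmid (c j + 1) (by omega) (by omega)
      have g3 := hGstep (c j)
      omega
    have hval : ∀ t, t < len → chi m n ((c j + t : ℕ) + 1 : ℤ) =
        if t = 0 then 0 else 1 := by
      intro t ht
      rw [chi_nat]
      by_cases h : t = 0
      · rw [if_pos h, h]
        simp only [Nat.add_zero]
        have hK2a := hK2 (c j)
        have hK2b := hK2 (c j + 1)
        have hGb := hGmid (c j + 1) (by omega) (by omega)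
        omega
      · rw [if_neg h]
        have hK2a := hK2 (c j + t)
        have hK2b := hK2 (c j + t + 1)
        have hGa := hGmid (c j + t) (by omega) (by omega)
        have hGb := hGmid (c j + t + 1) (by omega) (by omega)
        omega
    have hmapval : ((List.range len).map fun t => chi m n ((c j + t : ℕ) + 1 : ℤ)) =
        (List.range len).map fun t => if t = 0 then (0 : ℤ) else 1 := by
      apply List.map_congr_left
      intro t ht
      exact hval t (List.mem_range.mp ht)
    have hchi' : chi m' d ((j : ℤ) + 1) =
        ((j + 1) * m' / d : ℕ) - ((j * m' / d : ℕ) : ℤ) := chi_nat _ _ _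
    rcases show u1 = u0 ∨ u1 = u0 + 1 by omega with he | he
    · -- chi' = 0, len = q
      have hχ : chi m' d ((j : ℤ) + 1) = 0 := by rw [hchi']; omega
      have hlenq : len = q := by omega
      rw [hmapval, hχ, map_first_zero len hlen1]
      simp only [block, if_neg hcase, ← hdd, ← hq, hlenq]
      simp
    · -- chi' = 1, len = q + 1
      have hχ : chi m' d ((j : ℤ) + 1) = 1 := by rw [hchi']; omega
      have hlenq : len = q + 1 := by omega
      rw [hmapval, hχ, map_first_zero len hlen1]
      simp only [block, if_neg hcase, ← hdd, ← hq, hlenq, Nat.add_sub_cancel]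
      simp
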